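/- There exists a universal constant C ≥ 1 such that for all positive integers n ≥ r ≥ s with r even, there exists an (n,r,s)-design G with independence number α(G) ≤ C·r⁴·n^{2(r−s)/r}. -/

import Mathlib

/-- An `(n,r,s)`-design: an `r`-uniform hypergraph on vertex set `Fin n` (given by its
finite set of hyperedges) in which any two distinct hyperedges intersect in fewer than
`s` vertices. -/
def IsDesign (n r s : ℕ) (E : Finset (Finset (Fin n))) : Prop :=
  (∀ e ∈ E, e.card = r) ∧
  ∀ e₁ ∈ E, ∀ e₂ ∈ E, e₁ ≠ e₂ → (e₁ ∩ e₂).card < s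

/-- The independence number of a hypergraph: the size of the largest set of vertices
containing no hyperedge. -/
noncomputable def indepNum (n : ℕ) (E : Finset (Finset (Fin n))) : ℕ :=
  sSup {m | ∃ S : Finset (Fin n), (∀ e ∈ E, ¬ e ⊆ S) ∧ S.card = m}


open Finset
open scoped Classical

set_option maxHeartbeats 1000000

noncomputable section DesignMachine

/-- The type of `r`-element subsets of `Fin n`. -/
abbrev RS (n r : ℕ) : Type := {e : Finset (Fin n) // e.card = r}

variable {n r : ℕ}

lemma count_inS (S : Finset (Fin n)) :
    ((univ : Finset (RS n r)).filter fun x => x.1 ⊆ S).card = S.card.choose r := by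
  rw [← Finset.card_powersetCard r S]
  apply Finset.card_bij (fun x _ => x.1)
  · intro x hx
    simp only [Finset.mem_filter, Finset.mem_univ, true_and] at hx
    exact Finset.mem_powersetCard.2 ⟨hx, x.2⟩
  · intro x hx y hy h
    exact Subtype.ext h
  · intro e he
    rcases Finset.mem_powersetCard.1 he with ⟨hsub, hcard⟩
    exact ⟨⟨e, hcard⟩, by simp [hsub], rfl⟩

lemma card_RS_eq : Fintype.card (RS n r) = n.choose r := by
  classical
  have h := count_inS (n := n) (r := r) (univ : Finset (Fin n))
  simpa [Finset.filter_true_of_mem (fun x _ => Finset.subset_univ _), Finset.card_univ] using h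

/-- Counting subsets between `T` and `W`. -/
lemma count_between (T W : Finset (Fin n)) :
    ((univ : Finset (RS n r)).filter fun x => T ⊆ x.1 ∧ x.1 ⊆ W).card
      ≤ (W.card - T.card).choose (r - T.card) := by
  by_cases hTW : T ⊆ W
  · rw [← Finset.card_sdiff_of_subset hTW, ← Finset.card_powersetCard (r - T.card) (W \ T)]
    apply Finset.card_le_card_of_injOn (fun x => x.1 \ T)
    · intro x hx
      simp only [Finset.coe_filter, Finset.mem_filter, Set.mem_setOf_eq, Finset.mem_univ, true_and] at hx
      refine Finset.mem_powersetCard.2 ⟨Finset.sdiff_subset_sdiff hx.2 le_rfl, ?_⟩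
      rw [Finset.card_sdiff_of_subset hx.1, x.2]
    · intro x hx y hy h
      simp only [Finset.coe_filter, Set.mem_setOf_eq, Finset.mem_univ, true_and] at hx hy
      apply Subtype.ext
      have : x.1 \ T ∪ T = y.1 \ T ∪ T := by
        simp only at h; rw [h]
      rwa [Finset.sdiff_union_of_subset hx.1, Finset.sdiff_union_of_subset hy.1] at this
  · have : ((univ : Finset (RS n r)).filter fun x => T ⊆ x.1 ∧ x.1 ⊆ W) = ∅ := by
      apply Finset.filter_false_of_mem
      intro x _ hx
      exact hTW (hx.1.trans hx.2)
    simp [this]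

/-- Cover-counting: `r`-sets inside `W` meeting a fixed set `f` in at least `s` points. -/
lemma count_meet (W f : Finset (Fin n)) :
    ((univ : Finset (RS n r)).filter fun x => x.1 ⊆ W ∧ s ≤ (x.1 ∩ f).card).card
      ≤ f.card.choose s * (W.card - s).choose (r - s) := by
  classical
  have hcover : ((univ : Finset (RS n r)).filter fun x => x.1 ⊆ W ∧ s ≤ (x.1 ∩ f).card)
      ⊆ (Finset.powersetCard s f).biUnion
        (fun T => (univ : Finset (RS n r)).filter fun x => T ⊆ x.1 ∧ x.1 ⊆ W) := by
    intro x hx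
    simp only [Finset.mem_filter, Finset.mem_univ, true_and] at hx
    obtain ⟨T, hT, hTcard⟩ := Finset.exists_subset_card_eq hx.2
    refine Finset.mem_biUnion.2 ⟨T, ?_, ?_⟩
    · exact Finset.mem_powersetCard.2 ⟨hT.trans Finset.inter_subset_right, hTcard⟩
    · simp only [Finset.mem_filter, Finset.mem_univ, true_and]
      exact ⟨hT.trans Finset.inter_subset_left, hx.1⟩
  calc ((univ : Finset (RS n r)).filter fun x => x.1 ⊆ W ∧ s ≤ (x.1 ∩ f).card).card
      ≤ ((Finset.powersetCard s f).biUnion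
        (fun T => (univ : Finset (RS n r)).filter fun x => T ⊆ x.1 ∧ x.1 ⊆ W)).card :=
        Finset.card_le_card hcover
    _ ≤ ∑ T ∈ Finset.powersetCard s f,
          ((univ : Finset (RS n r)).filter fun x => T ⊆ x.1 ∧ x.1 ⊆ W).card :=
        Finset.card_biUnion_le
    _ ≤ (Finset.powersetCard s f).card * ((W.card - s).choose (r - s)) := by
        apply Finset.sum_le_card_nsmul
        intro T hT
        rcases Finset.mem_powersetCard.1 hT with ⟨_, hTcard⟩
        simpa [hTcard] using count_between (n := n) (r := r) T W
    _ = f.card.choose s * (W.card - s).choose (r - s) := by rw [Finset.card_powersetCard]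


/-- index `i` is "clean": its set intersects all earlier ones in `< s` points. -/
def cleanAt (s : ℕ) {K : ℕ} (ω : Fin K → RS n r) (i : Fin K) : Prop :=
  ∀ j, j < i → ((ω i).1 ∩ (ω j).1).card < s

def heavyP (s : ℕ) (S : Finset (Fin n)) (x : RS n r) : Prop := s ≤ (x.1 ∩ S).card

def hcount (s : ℕ) (S : Finset (Fin n)) {K : ℕ} (ω : Fin K → RS n r) : ℕ :=
  (univ.filter fun i => heavyP s S (ω i)).card

def GiP (s : ℕ) (S : Finset (Fin n)) {K : ℕ} (ω : Fin K → RS n r) (i : Fin K) : Prop :=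
  (ω i).1 ⊆ S ∧ cleanAt s ω i

def failSet (s : ℕ) (S : Finset (Fin n)) (H K : ℕ) : Finset (Fin K → RS n r) :=
  univ.filter fun ω => (∀ i, ¬ GiP s S ω i) ∧ hcount s S ω < H

def totalFail (s : ℕ) (S : Finset (Fin n)) (K : ℕ) : Finset (Fin K → RS n r) :=
  univ.filter fun ω => ∀ i, ¬ GiP s S ω i

def heavyTail (s : ℕ) (S : Finset (Fin n)) (H K : ℕ) : Finset (Fin K → RS n r) :=
  univ.filter fun ω => H ≤ hcount s S ω

lemma totalFail_subset (s : ℕ) (S : Finset (Fin n)) (H K : ℕ) :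
    totalFail (n := n) (r := r) s S K ⊆ failSet s S H K ∪ heavyTail s S H K := by
  intro ω hω
  simp only [totalFail, failSet, heavyTail, Finset.mem_filter, Finset.mem_univ, true_and,
    Finset.mem_union] at *
  by_cases h : hcount s S ω < H
  · exact Or.inl ⟨hω, h⟩
  · exact Or.inr (le_of_not_gt h)

section Step

variable (s : ℕ) (S : Finset (Fin n))

lemma init_cleanAt {K : ℕ} (ω : Fin (K + 1) → RS n r) (i : Fin K) :
    cleanAt s (Fin.init ω) i ↔ cleanAt s ω i.castSucc := by
  constructor
  · intro h j hj
    have hjlast : j ≠ Fin.last K := by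
      intro hEq
      rw [hEq] at hj
      exact absurd (hj.trans (Fin.castSucc_lt_last i)) (lt_irrefl _)
    obtain ⟨j', hj'⟩ := Fin.exists_castSucc_eq.2 hjlast
    subst hj'
    have : j' < i := by rwa [Fin.castSucc_lt_castSucc_iff] at hj
    have := h j' this
    simpa [Fin.init] using this
  · intro h j hj
    have := h j.castSucc (by rwa [Fin.castSucc_lt_castSucc_iff])
    simpa [Fin.init] using this

lemma init_mem_failSet {K H : ℕ} (ω : Fin (K + 1) → RS n r)
    (hω : ω ∈ failSet s S H (K + 1)) : Fin.init ω ∈ failSet s S H K := by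
  simp only [failSet, Finset.mem_filter, Finset.mem_univ, true_and] at hω ⊢
  constructor
  · intro i hi
    apply hω.1 i.castSucc
    refine ⟨?_, ?_⟩
    · simpa [Fin.init] using hi.1
    · exact (init_cleanAt s ω i).1 hi.2
  · refine lt_of_le_of_lt ?_ hω.2
    unfold hcount
    apply Finset.card_le_card_of_injOn (fun i => i.castSucc)
    · intro i hi
      simp only [Finset.coe_filter, Finset.mem_filter, Set.mem_setOf_eq, Finset.mem_univ, true_and] at hi ⊢
      simpa [Fin.init] using hi
    · intro a _ b _ h
      exact Fin.castSucc_injective _ h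

/-- the set of "bad continuations" of a prefix `p`. -/
def badCont {K : ℕ} (p : Fin K → RS n r) : Finset (RS n r) :=
  univ.filter fun x => ¬ (x.1 ⊆ S ∧ ∀ j, (x.1 ∩ (p j).1).card < s)

lemma last_bad {K H : ℕ} (ω : Fin (K + 1) → RS n r)
    (hω : ω ∈ failSet s S H (K + 1)) : ω (Fin.last K) ∈ badCont s S (Fin.init ω) := by
  simp only [failSet, Finset.mem_filter, Finset.mem_univ, true_and] at hω
  have h := hω.1 (Fin.last K)
  simp only [badCont, Finset.mem_filter, Finset.mem_univ, true_and]
  intro hc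
  apply h
  refine ⟨hc.1, ?_⟩
  intro j hj
  have hjlast : j ≠ Fin.last K := Fin.ne_of_lt hj
  obtain ⟨j', hj'⟩ := Fin.exists_castSucc_eq.2 hjlast
  subst hj'
  have := hc.2 j'
  simpa [Fin.init] using this

/-- Cardinality bound for bad continuations, given few heavy coordinates in the prefix. -/
lemma badCont_card {K H M : ℕ} (hS : S.card = M) (p : Fin K → RS n r)
    (hp : hcount s S p ≤ H) :
    (badCont s S p).card ≤ (n.choose r + H * (r.choose s * (M - s).choose (r - s)))
      - M.choose r := by
  classical
  set Q := r.choose s * (M - s).choose (r - s) with hQ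
  set good : Finset (RS n r) :=
    univ.filter fun x => x.1 ⊆ S ∧ ∀ j, (x.1 ∩ (p j).1).card < s with hgood
  have hsum : (badCont s S p).card + good.card = n.choose r := by
    have := Finset.card_filter_add_card_filter_not
      (s := (univ : Finset (RS n r)))
     
      (p := fun x => x.1 ⊆ S ∧ ∀ j, (x.1 ∩ (p j).1).card < s)
    rw [Finset.card_univ, card_RS_eq] at this
    rw [add_comm]
    exact this
  -- lower bound for good
  have hgoodlb : M.choose r ≤ good.card + H * Q := by
    have hin : ((univ : Finset (RS n r)).filter fun x => x.1 ⊆ S).card = M.choose r := by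
      rw [count_inS, hS]
    have hsplit : good.card
        + (((univ : Finset (RS n r)).filter fun x => x.1 ⊆ S).filter
            fun x => ¬ (∀ j, (x.1 ∩ (p j).1).card < s)).card
        = ((univ : Finset (RS n r)).filter fun x => x.1 ⊆ S).card := by
      have := Finset.card_filter_add_card_filter_not
        (s := (univ : Finset (RS n r)).filter fun x => x.1 ⊆ S)
       
        (p := fun x => ∀ j, (x.1 ∩ (p j).1).card < s)
      rw [← this]
      congr 1
      rw [hgood, Finset.filter_filter]
    have hbad2 : (((univ : Finset (RS n r)).filter fun x => x.1 ⊆ S).filter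
            fun x => ¬ (∀ j, (x.1 ∩ (p j).1).card < s)).card ≤ H * Q := by
      have hsub : (((univ : Finset (RS n r)).filter fun x => x.1 ⊆ S).filter
            fun x => ¬ (∀ j, (x.1 ∩ (p j).1).card < s))
          ⊆ (univ : Finset (Fin K)).biUnion (fun j =>
              (univ : Finset (RS n r)).filter fun x => x.1 ⊆ S ∧ s ≤ (x.1 ∩ (p j).1).card) := by
        intro x hx
        simp only [Finset.mem_filter, Finset.mem_univ, true_and, not_forall, not_lt] at hx
        obtain ⟨j, hj⟩ := hx.2
        exact Finset.mem_biUnion.2 ⟨j, Finset.mem_univ _,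
          by simp only [Finset.mem_filter, Finset.mem_univ, true_and]; exact ⟨hx.1, hj⟩⟩
      refine le_trans (Finset.card_le_card hsub) ?_
      refine le_trans Finset.card_biUnion_le ?_
      have hterm : ∀ j : Fin K,
          ((univ : Finset (RS n r)).filter fun x => x.1 ⊆ S ∧ s ≤ (x.1 ∩ (p j).1).card).card
          ≤ if heavyP s S (p j) then Q else 0 := by
        intro j
        by_cases hh : heavyP s S (p j)
        · rw [if_pos hh]
          have := count_meet (n := n) (r := r) (s := s) S (p j).1
          rw [(p j).2, hS] at this
          exact this
        · rw [if_neg hh]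
          have : ((univ : Finset (RS n r)).filter
              fun x => x.1 ⊆ S ∧ s ≤ (x.1 ∩ (p j).1).card) = ∅ := by
            apply Finset.filter_false_of_mem
            intro x _ hx
            apply hh
            unfold heavyP
            calc s ≤ (x.1 ∩ (p j).1).card := hx.2
              _ ≤ ((p j).1 ∩ S).card := by
                  apply Finset.card_le_card
                  intro a ha
                  simp only [Finset.mem_inter] at ha ⊢
                  exact ⟨ha.2, hx.1 ha.1⟩
          simp [this]
      refine le_trans (Finset.sum_le_sum fun j _ => hterm j) ?_
      have hsum2 : ∑ j : Fin K, (if heavyP s S (p j) then Q else 0)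
          = (Finset.filter (fun j => heavyP s S (p j)) univ).card * Q := by
        rw [Finset.sum_ite, Finset.sum_const, Finset.sum_const]
        simp [smul_eq_mul, mul_comm]
      rw [hsum2]
      calc (Finset.filter (fun j => heavyP s S (p j)) univ).card * Q
          = hcount s S p * Q := rfl
        _ ≤ H * Q := Nat.mul_le_mul_right Q hp
    omega
  omega

lemma failSet_step {K H M : ℕ} (hS : S.card = M) :
    (failSet (n := n) (r := r) s S H (K + 1)).card
      ≤ (failSet (n := n) (r := r) s S H K).card *
        ((n.choose r + H * (r.choose s * (M - s).choose (r - s))) - M.choose r) := by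
  classical
  set N' := (n.choose r + H * (r.choose s * (M - s).choose (r - s))) - M.choose r with hN'
  have hmaps : ∀ ω ∈ failSet (n := n) (r := r) s S H (K + 1),
      Fin.init ω ∈ failSet (n := n) (r := r) s S H K :=
    fun ω hω => init_mem_failSet s S ω hω
  rw [Finset.card_eq_sum_card_fiberwise hmaps]
  refine le_trans (Finset.sum_le_card_nsmul _ _ N' ?_) (by rw [smul_eq_mul])
  intro p hp
  -- fiber over p injects into badCont p
  have hinj : ((failSet s S H (K + 1)).filter fun ω => Fin.init ω = p).card
      ≤ (badCont s S p).card := by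
    apply Finset.card_le_card_of_injOn (fun ω => ω (Fin.last K))
    · intro ω hω
      simp only [Finset.coe_filter, Finset.mem_filter, Set.mem_setOf_eq] at hω
      have := last_bad s S ω hω.1
      rwa [hω.2] at this
    · intro ω₁ h₁ ω₂ h₂ hlast
      simp only [Finset.coe_filter, Set.mem_setOf_eq] at h₁ h₂
      simp only at hlast
      have heq : Fin.snoc (Fin.init ω₁) (ω₁ (Fin.last K))
           = Fin.snoc (Fin.init ω₂) (ω₂ (Fin.last K)) := by
        rw [h₁.2, h₂.2, hlast]
      rwa [Fin.snoc_init_self, Fin.snoc_init_self] at heq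
  refine le_trans hinj ?_
  apply badCont_card s S hS
  simp only [failSet, Finset.mem_filter, Finset.mem_univ, true_and] at hp
  exact le_of_lt hp.2

lemma failSet_card_le {H M : ℕ} (hS : S.card = M) (K : ℕ) :
    (failSet (n := n) (r := r) s S H K).card
      ≤ ((n.choose r + H * (r.choose s * (M - s).choose (r - s))) - M.choose r) ^ K := by
  induction K with
  | zero =>
      refine le_trans (Finset.card_filter_le _ _) ?_
      rw [Finset.card_univ]
      simp
  | succ K ih =>
      refine le_trans (failSet_step s S hS) ?_
      rw [pow_succ]
      exact Nat.mul_le_mul_right _ ih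

end Step


section PartC

variable {n r : ℕ}

lemma count_heavyRS (s : ℕ) (S : Finset (Fin n)) {M : ℕ} (hS : S.card = M) :
    ((univ : Finset (RS n r)).filter fun x => heavyP s S x).card
      ≤ M.choose s * (n - s).choose (r - s) := by
  have h := count_meet (n := n) (r := r) (s := s) (univ : Finset (Fin n)) S
  rw [Finset.card_univ, Fintype.card_fin, hS] at h
  refine le_trans (le_of_eq (congrArg Finset.card ?_)) h
  apply Finset.filter_congr
  intro x _
  simp [heavyP, Finset.subset_univ]

lemma count_allHeavy (s : ℕ) (S : Finset (Fin n)) {K : ℕ} (T : Finset (Fin K)) (B : ℕ)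
    (hB : ((univ : Finset (RS n r)).filter fun x => heavyP s S x).card ≤ B) :
    ((univ : Finset (Fin K → RS n r)).filter fun ω => ∀ i ∈ T, heavyP s S (ω i)).card
      ≤ B ^ T.card * (n.choose r) ^ (K - T.card) := by
  classical
  have hcard : ((univ : Finset (Fin K → RS n r)).filter fun ω => ∀ i ∈ T, heavyP s S (ω i)).card
      = Fintype.card {ω : Fin K → RS n r // ∀ i, i ∈ T → heavyP s S (ω i)} := by
    rw [Fintype.card_subtype]
  rw [hcard,
    Fintype.card_congr
      (Equiv.subtypePiEquivPi (p := fun (i : Fin K) (x : RS n r) => i ∈ T → heavyP s S x)),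
    Fintype.card_pi]
  have hfac : ∀ i ∈ (univ : Finset (Fin K)),
      Fintype.card {x : RS n r // i ∈ T → heavyP s S x}
        ≤ (if i ∈ T then B else n.choose r) := by
    intro i _
    by_cases hi : i ∈ T
    · rw [if_pos hi, Fintype.card_subtype]
      refine le_trans ?_ hB
      apply Finset.card_le_card
      intro x hx
      simp only [Finset.mem_filter, Finset.mem_univ, true_and] at hx ⊢
      exact hx hi
    · rw [if_neg hi, Fintype.card_subtype]
      refine le_trans (Finset.card_filter_le _ _) ?_
      rw [Finset.card_univ, card_RS_eq]
  refine le_trans (Finset.prod_le_prod' hfac) ?_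
  rw [Finset.prod_ite, Finset.prod_const, Finset.prod_const]
  have h1 : (Finset.filter (fun i => i ∈ T) (univ : Finset (Fin K))).card = T.card := by
    rw [Finset.filter_univ_mem]
  have h2 : (Finset.filter (fun i => ¬ i ∈ T) (univ : Finset (Fin K))).card = K - T.card := by
    rw [Finset.filter_not, Finset.filter_univ_mem, Finset.card_sdiff_of_subset (Finset.subset_univ _),
      Finset.card_univ, Fintype.card_fin]
  rw [h1, h2]

lemma heavyTail_card (s : ℕ) (S : Finset (Fin n)) {K H M : ℕ} (hS : S.card = M) :
    (heavyTail (n := n) (r := r) s S H K).card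
      ≤ K.choose H * ((M.choose s * (n - s).choose (r - s)) ^ H * (n.choose r) ^ (K - H)) := by
  classical
  set B := M.choose s * (n - s).choose (r - s) with hB
  have hcover : heavyTail (n := n) (r := r) s S H K ⊆
      (Finset.powersetCard H (univ : Finset (Fin K))).biUnion
        (fun T => (univ : Finset (Fin K → RS n r)).filter fun ω => ∀ i ∈ T, heavyP s S (ω i)) := by
    intro ω hω
    simp only [heavyTail, Finset.mem_filter, Finset.mem_univ, true_and] at hω
    obtain ⟨T, hT, hTcard⟩ := Finset.exists_subset_card_eq (s := Finset.filter
      (fun i => heavyP s S (ω i)) univ) (n := H) hω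
    refine Finset.mem_biUnion.2 ⟨T, Finset.mem_powersetCard.2 ⟨Finset.subset_univ _, hTcard⟩, ?_⟩
    simp only [Finset.mem_filter, Finset.mem_univ, true_and]
    intro i hi
    have := hT hi
    simp only [Finset.mem_filter, Finset.mem_univ, true_and] at this
    exact this
  refine le_trans (Finset.card_le_card hcover) ?_
  refine le_trans Finset.card_biUnion_le ?_
  refine le_trans (Finset.sum_le_card_nsmul _ _ (B ^ H * (n.choose r) ^ (K - H)) ?_) ?_
  · intro T hT
    rcases Finset.mem_powersetCard.1 hT with ⟨_, hTcard⟩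
    have := count_allHeavy s S T B (count_heavyRS s S hS)
    rwa [hTcard] at this
  · rw [smul_eq_mul, Finset.card_powersetCard, Finset.card_univ, Fintype.card_fin]

lemma totalFail_card (s : ℕ) (S : Finset (Fin n)) {K H M : ℕ} (hS : S.card = M) :
    (totalFail (n := n) (r := r) s S K).card
      ≤ ((n.choose r + H * (r.choose s * (M - s).choose (r - s))) - M.choose r) ^ K
        + K.choose H * ((M.choose s * (n - s).choose (r - s)) ^ H * (n.choose r) ^ (K - H)) := by
  refine le_trans (Finset.card_le_card (totalFail_subset s S H K)) ?_
  refine le_trans (Finset.card_union_le _ _) ?_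
  exact Nat.add_le_add (failSet_card_le s S hS K) (heavyTail_card s S hS)

lemma exists_good (s M H K : ℕ)
    (hnum : n.choose M *
        (((n.choose r + H * (r.choose s * (M - s).choose (r - s))) - M.choose r) ^ K
          + K.choose H * ((M.choose s * (n - s).choose (r - s)) ^ H * (n.choose r) ^ (K - H)))
      < (n.choose r) ^ K) :
    ∃ ω : Fin K → RS n r,
      ∀ S ∈ Finset.powersetCard M (univ : Finset (Fin n)), ∃ i, GiP s S ω i := by
  classical
  set Bad : Finset (Fin K → RS n r) :=
    (Finset.powersetCard M (univ : Finset (Fin n))).biUnion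
      (fun S => totalFail (n := n) (r := r) s S K) with hBad
  have hBadCard : Bad.card < (univ : Finset (Fin K → RS n r)).card := by
    rw [Finset.card_univ, Fintype.card_fun, card_RS_eq, Fintype.card_fin]
    refine lt_of_le_of_lt ?_ hnum
    refine le_trans Finset.card_biUnion_le ?_
    refine le_trans (Finset.sum_le_card_nsmul _ _
      (((n.choose r + H * (r.choose s * (M - s).choose (r - s))) - M.choose r) ^ K
          + K.choose H * ((M.choose s * (n - s).choose (r - s)) ^ H * (n.choose r) ^ (K - H)))
      ?_) ?_
    · intro S hS
      rcases Finset.mem_powersetCard.1 hS with ⟨_, hcard⟩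
      exact totalFail_card s S hcard
    · rw [smul_eq_mul, Finset.card_powersetCard, Finset.card_univ, Fintype.card_fin]
  have hne : (univ \ Bad).Nonempty := by
    rw [← Finset.card_pos, Finset.card_sdiff_of_subset (Finset.subset_univ _)]
    omega
  obtain ⟨ω, hω⟩ := hne
  refine ⟨ω, ?_⟩
  intro S hS
  have hωBad : ω ∉ Bad := (Finset.mem_sdiff.1 hω).2
  by_contra hcon
  push_neg at hcon
  apply hωBad
  rw [hBad]
  refine Finset.mem_biUnion.2 ⟨S, hS, ?_⟩
  simp only [totalFail, Finset.mem_filter, Finset.mem_univ, true_and]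
  exact hcon

end PartC


section PartD

variable {n r : ℕ}

/-- The design extracted from a sample `ω`: the sets that are clean w.r.t. earlier ones. -/
def EDes (s : ℕ) {K : ℕ} (ω : Fin K → RS n r) : Finset (Finset (Fin n)) :=
  ((univ : Finset (Fin K)).filter fun i => cleanAt s ω i).image fun i => (ω i).1

lemma isDesign_EDes (s : ℕ) {K : ℕ} (ω : Fin K → RS n r) :
    IsDesign n r s (EDes s ω) := by
  constructor
  · intro e he
    simp only [EDes, Finset.mem_image, Finset.mem_filter, Finset.mem_univ, true_and] at he
    obtain ⟨i, _, rfl⟩ := he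
    exact (ω i).2
  · intro e₁ he₁ e₂ he₂ hne
    simp only [EDes, Finset.mem_image, Finset.mem_filter, Finset.mem_univ, true_and] at he₁ he₂
    obtain ⟨i, hi, rfl⟩ := he₁
    obtain ⟨j, hj, rfl⟩ := he₂
    have hij : i ≠ j := by rintro rfl; exact hne rfl
    rcases lt_or_gt_of_ne hij with h | h
    · rw [Finset.inter_comm]
      exact hj i h
    · exact hi j h

lemma empty_not_mem_EDes (s : ℕ) {K : ℕ} (ω : Fin K → RS n r) (hr : 1 ≤ r) :
    ∅ ∉ EDes s ω := by
  intro h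
  simp only [EDes, Finset.mem_image, Finset.mem_filter, Finset.mem_univ, true_and] at h
  obtain ⟨i, _, hi⟩ := h
  have h2 := (ω i).2
  rw [hi, Finset.card_empty] at h2
  omega

lemma EDes_covers (s M : ℕ) {K : ℕ} (ω : Fin K → RS n r)
    (hgood : ∀ S ∈ Finset.powersetCard M (univ : Finset (Fin n)), ∃ i, GiP s S ω i)
    (S' : Finset (Fin n)) (hS' : S'.card = M) :
    ∃ e ∈ EDes s ω, e ⊆ S' := by
  have hmem : S' ∈ Finset.powersetCard M (univ : Finset (Fin n)) :=
    Finset.mem_powersetCard.2 ⟨Finset.subset_univ _, hS'⟩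
  obtain ⟨i, hGi⟩ := hgood S' hmem
  refine ⟨(ω i).1, ?_, hGi.1⟩
  simp only [EDes, Finset.mem_image, Finset.mem_filter, Finset.mem_univ, true_and]
  exact ⟨i, hGi.2, rfl⟩

lemma indepNum_le_of (E : Finset (Finset (Fin n))) (hE : ∅ ∉ E) (m : ℕ)
    (h : ∀ S : Finset (Fin n), (∀ e ∈ E, ¬ e ⊆ S) → S.card ≤ m) : indepNum n E ≤ m := by
  apply csSup_le
  · refine ⟨0, ∅, ?_, Finset.card_empty⟩
    intro e he hsub
    rw [Finset.subset_empty] at hsub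
    exact hE (hsub ▸ he)
  · rintro b ⟨S, hind, rfl⟩
    exact h S hind

lemma indep_card_le_of_cover {E : Finset (Finset (Fin n))} {M : ℕ}
    (hcov : ∀ S' : Finset (Fin n), S'.card = M → ∃ e ∈ E, e ⊆ S')
    (S : Finset (Fin n)) (hind : ∀ e ∈ E, ¬ e ⊆ S) : S.card ≤ M - 1 := by
  by_contra hcon
  push_neg at hcon
  have hM : M ≤ S.card := by omega
  obtain ⟨S', hS'sub, hS'card⟩ := Finset.exists_subset_card_eq hM
  obtain ⟨e, heE, hesub⟩ := hcov S' hS'card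
  exact hind e heE (hesub.trans hS'sub)

end PartD



section PartE

open Real

lemma exp_one_ge_two' : (2 : ℝ) ≤ Real.exp 1 := by
  have := Real.exp_one_gt_d9
  nlinarith

lemma exp_one_le_four' : Real.exp 1 ≤ (4 : ℝ) := by
  have := Real.exp_one_lt_d9
  nlinarith


lemma pow_self_le_factorial_mul_exp (H : ℕ) :
    (H : ℝ) ^ H ≤ (H.factorial : ℝ) * Real.exp 1 ^ H := by
  induction H with
  | zero => simp
  | succ H ih =>
      have hkey : ((H : ℝ) + 1) ^ H ≤ Real.exp 1 * (H : ℝ) ^ H := by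
        rcases Nat.eq_zero_or_pos H with h | hpos
        · subst h
          have h2 := exp_one_ge_two'
          norm_num
          try linarith
        · have hHpos : (0 : ℝ) < H := by exact_mod_cast hpos
          have h1 : (H : ℝ) + 1 ≤ (H : ℝ) * Real.exp (1 / (H : ℝ)) := by
            have h2 := Real.add_one_le_exp (1 / (H : ℝ))
            calc (H : ℝ) + 1 = (H : ℝ) * (1 / (H : ℝ) + 1) := by
                  rw [mul_add, mul_one, mul_one_div, div_self (ne_of_gt hHpos), add_comm]
              _ ≤ (H : ℝ) * Real.exp (1 / (H : ℝ)) :=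
                  mul_le_mul_of_nonneg_left h2 (le_of_lt hHpos)
          calc ((H : ℝ) + 1) ^ H ≤ ((H : ℝ) * Real.exp (1 / (H : ℝ))) ^ H :=
                pow_le_pow_left₀ (by positivity) h1 H
            _ = (H : ℝ) ^ H * (Real.exp (1 / (H : ℝ))) ^ H := mul_pow _ _ _
            _ = (H : ℝ) ^ H * Real.exp (((H : ℕ) : ℝ) * (1 / (H : ℝ))) := by
                rw [Real.exp_nat_mul]
            _ = (H : ℝ) ^ H * Real.exp 1 := by
                rw [mul_one_div, div_self (ne_of_gt hHpos)]
            _ = Real.exp 1 * (H : ℝ) ^ H := by ring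
      have hexp : (0 : ℝ) < Real.exp 1 := Real.exp_pos 1
      calc ((H + 1 : ℕ) : ℝ) ^ (H + 1) = ((H : ℝ) + 1) * ((H : ℝ) + 1) ^ H := by
            push_cast; ring
        _ ≤ ((H : ℝ) + 1) * (Real.exp 1 * (H : ℝ) ^ H) :=
            mul_le_mul_of_nonneg_left hkey (by positivity)
        _ ≤ ((H : ℝ) + 1) * (Real.exp 1 * ((H.factorial : ℝ) * Real.exp 1 ^ H)) := by
            apply mul_le_mul_of_nonneg_left _ (by positivity)
            exact mul_le_mul_of_nonneg_left ih (le_of_lt hexp)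
        _ = (((H + 1) * H.factorial : ℕ) : ℝ) * Real.exp 1 ^ (H + 1) := by
            push_cast; ring
        _ = ((H + 1).factorial : ℝ) * Real.exp 1 ^ (H + 1) := by
            rw [Nat.factorial_succ]

lemma choose_le_two_pow' (nn M : ℕ) : nn.choose M ≤ 2 ^ nn := by
  rcases le_or_gt M nn with h | h
  · calc nn.choose M ≤ ∑ i ∈ Finset.range (nn + 1), nn.choose i :=
        Finset.single_le_sum (f := fun i => nn.choose i) (fun _ _ => Nat.zero_le _)
          (Finset.mem_range.2 (by omega))
      _ = 2 ^ nn := Nat.sum_range_choose nn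
  · rw [Nat.choose_eq_zero_of_lt h]; exact Nat.zero_le _

lemma term2_bound {K H N B : ℕ} (hN : 0 < N) (hH : 0 < H)
    (hKB : 8 * (K * B) ≤ H * N) :
    (K.choose H : ℝ) * ((B : ℝ) ^ H * (N : ℝ) ^ (K - H)) ≤ (N : ℝ) ^ K * (1 / 2) ^ H := by
  rcases le_or_gt H K with hHK | hHK
  · have hNR : (0 : ℝ) < N := by exact_mod_cast hN
    have hHR : (0 : ℝ) < H := by exact_mod_cast hH
    have hfacpos : (0 : ℝ) < (H.factorial : ℝ) := by exact_mod_cast H.factorial_pos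
    have hchoose : (K.choose H : ℝ) ≤ (K : ℝ) ^ H / (H.factorial : ℝ) := by
      rw [le_div_iff₀ hfacpos]
      have : K.choose H * H.factorial = K.descFactorial H := by
        rw [Nat.descFactorial_eq_factorial_mul_choose]; ring
      calc (K.choose H : ℝ) * (H.factorial : ℝ) = (K.descFactorial H : ℝ) := by
            exact_mod_cast congrArg (Nat.cast (R := ℝ)) this
        _ ≤ (K : ℝ) ^ H := by exact_mod_cast Nat.descFactorial_le_pow K H
    have hinvfac : 1 / (H.factorial : ℝ) ≤ (Real.exp 1 / (H : ℝ)) ^ H := by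
      rw [div_pow, div_le_div_iff₀ hfacpos (by positivity), one_mul]
      calc (H : ℝ) ^ H ≤ (H.factorial : ℝ) * Real.exp 1 ^ H :=
            pow_self_le_factorial_mul_exp H
        _ = Real.exp 1 ^ H * (H.factorial : ℝ) := by ring
    have hbase0 : (0 : ℝ) ≤ (K : ℝ) * B * Real.exp 1 / ((H : ℝ) * N) := by positivity
    have hbase : (K : ℝ) * B * Real.exp 1 / ((H : ℝ) * N) ≤ 1 / 2 := by
      rw [div_le_iff₀ (by positivity)]
      have h8 : (8 : ℝ) * ((K : ℝ) * B) ≤ (H : ℝ) * N := by exact_mod_cast hKB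
      have he4 : Real.exp 1 ≤ 4 := exp_one_le_four'
      have hKB0 : (0 : ℝ) ≤ (K : ℝ) * B := by positivity
      nlinarith
    calc (K.choose H : ℝ) * ((B : ℝ) ^ H * (N : ℝ) ^ (K - H))
        ≤ ((K : ℝ) ^ H / (H.factorial : ℝ)) * ((B : ℝ) ^ H * (N : ℝ) ^ (K - H)) :=
          mul_le_mul_of_nonneg_right hchoose (by positivity)
      _ = ((K : ℝ) * B) ^ H * (1 / (H.factorial : ℝ)) * (N : ℝ) ^ (K - H) := by
          rw [mul_pow]; ring
      _ ≤ ((K : ℝ) * B) ^ H * ((Real.exp 1 / (H : ℝ)) ^ H) * (N : ℝ) ^ (K - H) := by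
          apply mul_le_mul_of_nonneg_right _ (by positivity)
          exact mul_le_mul_of_nonneg_left hinvfac (by positivity)
      _ = ((K : ℝ) * B * Real.exp 1 / ((H : ℝ) * N)) ^ H * ((N : ℝ) ^ H * (N : ℝ) ^ (K - H)) := by
          have hHne : (H : ℝ) ≠ 0 := ne_of_gt hHR
          have hNne : (N : ℝ) ≠ 0 := ne_of_gt hNR
          generalize Real.exp 1 = E
          field_simp
          rw [← mul_pow, ← mul_pow]; congr 1; field_simp
      _ = ((K : ℝ) * B * Real.exp 1 / ((H : ℝ) * N)) ^ H * (N : ℝ) ^ K := by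
          rw [← pow_add]
          congr 2
          omega
      _ ≤ (1 / 2 : ℝ) ^ H * (N : ℝ) ^ K :=
          mul_le_mul_of_nonneg_right (pow_le_pow_left₀ hbase0 hbase H) (by positivity)
      _ = (N : ℝ) ^ K * (1 / 2) ^ H := by ring
  · rw [Nat.choose_eq_zero_of_lt hHK]
    push_cast
    rw [zero_mul]
    positivity

lemma numeric_main {N Cm Q B K H M nn : ℕ}
    (hN1 : 1 ≤ N) (hn1 : 1 ≤ nn) (hCmN : Cm ≤ N)
    (hcov : (4 * nn + 3) * N ≤ K * Cm)
    (hHQ : 2 * (H * Q) ≤ Cm)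
    (hH8 : 8 * (K * B) ≤ H * N)
    (hH4n : 8 * nn ≤ H) :
    nn.choose M * ((N + H * Q - Cm) ^ K + K.choose H * (B ^ H * N ^ (K - H))) < N ^ K := by
  have hNR : (0 : ℝ) < N := by exact_mod_cast hN1
  have hH : 0 < H := by omega
  have hCmR : (Cm : ℝ) ≤ N := by exact_mod_cast hCmN
  -- real bound on the first term base
  have hCm2 : (H : ℝ) * Q ≤ (Cm : ℝ) / 2 := by
    have : ((2 * (H * Q) : ℕ) : ℝ) ≤ (Cm : ℝ) := by exact_mod_cast hHQ
    push_cast at this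
    linarith
  have hA : ((N + H * Q - Cm : ℕ) : ℝ) ≤ (N : ℝ) - (Cm : ℝ) / 2 := by
    have h1 : Cm ≤ N + H * Q := le_trans hCmN (Nat.le_add_right _ _)
    rw [Nat.cast_sub h1]
    push_cast
    linarith
  have hA0 : (0 : ℝ) ≤ (N : ℝ) - (Cm : ℝ) / 2 := by linarith
  have hstep : (N : ℝ) - (Cm : ℝ) / 2 ≤ (N : ℝ) * Real.exp (-((Cm : ℝ) / (2 * N))) := by
    have h := Real.add_one_le_exp (-((Cm : ℝ) / (2 * (N : ℝ))))
    have h2 := mul_le_mul_of_nonneg_left h (le_of_lt hNR)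
    calc (N : ℝ) - (Cm : ℝ) / 2 = (N : ℝ) * (-((Cm : ℝ) / (2 * (N : ℝ))) + 1) := by
          field_simp
          ring
      _ ≤ (N : ℝ) * Real.exp (-((Cm : ℝ) / (2 * N))) := h2
  have hexpo : -((K : ℝ) * ((Cm : ℝ) / (2 * N))) ≤ -(((2 * nn + 1 : ℕ) : ℝ)) := by
    rw [neg_le_neg_iff]
    have hc : ((4 * nn + 3 : ℕ) : ℝ) * N ≤ (K : ℝ) * Cm := by exact_mod_cast hcov
    rw [show (K : ℝ) * ((Cm : ℝ) / (2 * N)) = ((K : ℝ) * Cm) / (2 * N) by ring,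
      le_div_iff₀ (by positivity)]
    push_cast at hc ⊢
    nlinarith
  have hterm1 : ((N + H * Q - Cm : ℕ) : ℝ) ^ K
      ≤ (N : ℝ) ^ K * Real.exp (-(((2 * nn + 1 : ℕ) : ℝ))) := by
    calc ((N + H * Q - Cm : ℕ) : ℝ) ^ K ≤ ((N : ℝ) - (Cm : ℝ) / 2) ^ K :=
          pow_le_pow_left₀ (by positivity) hA K
      _ ≤ ((N : ℝ) * Real.exp (-((Cm : ℝ) / (2 * N)))) ^ K := pow_le_pow_left₀ hA0 hstep K
      _ = (N : ℝ) ^ K * Real.exp (-((Cm : ℝ) / (2 * N))) ^ K := mul_pow _ _ _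
      _ = (N : ℝ) ^ K * Real.exp (-((K : ℝ) * ((Cm : ℝ) / (2 * N)))) := by
          rw [← Real.exp_nat_mul]
          congr 2
          ring
      _ ≤ (N : ℝ) ^ K * Real.exp (-(((2 * nn + 1 : ℕ) : ℝ))) := by
          apply mul_le_mul_of_nonneg_left (Real.exp_le_exp.2 hexpo) (by positivity)
  -- numeric scalar bounds
  have hscal1 : (2 : ℝ) ^ nn * Real.exp (-(((2 * nn + 1 : ℕ) : ℝ))) ≤ 1 / 2 := by
    have hpow : (2 : ℝ) ^ (2 * nn + 1) ≤ Real.exp (((2 * nn + 1 : ℕ) : ℝ)) := by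
      calc (2 : ℝ) ^ (2 * nn + 1) ≤ (Real.exp 1) ^ (2 * nn + 1) :=
            pow_le_pow_left₀ (by norm_num) exp_one_ge_two' _
        _ = Real.exp (((2 * nn + 1 : ℕ) : ℝ)) := by
            rw [← Real.exp_nat_mul]
            congr 1
            push_cast
            ring
    rw [Real.exp_neg]
    rw [mul_inv_le_iff₀ (Real.exp_pos _), mul_comm (1 / 2 : ℝ)]
    calc (2 : ℝ) ^ nn = 1 / 2 * 2 ^ (nn + 1) := by ring
      _ ≤ 1 / 2 * 2 ^ (2 * nn + 1) := by
          apply mul_le_mul_of_nonneg_left _ (by norm_num)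
          apply pow_le_pow_right₀ (by norm_num)
          omega
      _ ≤ 1 / 2 * Real.exp (((2 * nn + 1 : ℕ) : ℝ)) :=
          mul_le_mul_of_nonneg_left hpow (by norm_num)
      _ ≤ Real.exp (((2 * nn + 1 : ℕ) : ℝ)) * (1 / 2) := le_of_eq (by ring)
  have hscal2 : (2 : ℝ) ^ nn * (1 / 2 : ℝ) ^ H ≤ 1 / 4 := by
    have h1 : ((1 : ℝ) / 2) ^ H ≤ (1 / 2 : ℝ) ^ (8 * nn) :=
      pow_le_pow_of_le_one (by norm_num) (by norm_num) hH4n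
    have h2 : (2 : ℝ) ^ nn * (1 / 2 : ℝ) ^ (8 * nn) ≤ 1 / 4 := by
      have he : (2 : ℝ) ^ nn * (1 / 2 : ℝ) ^ (8 * nn) = ((2 : ℝ) * (1 / 2 : ℝ) ^ 8) ^ nn := by
        rw [mul_pow, pow_mul]
      rw [he]
      have he2 : ((2 : ℝ) * (1 / 2 : ℝ) ^ 8) = 1 / 128 := by norm_num
      rw [he2]
      calc ((1 : ℝ) / 128) ^ nn ≤ ((1 : ℝ) / 128) ^ 1 :=
            pow_le_pow_of_le_one (by norm_num) (by norm_num) hn1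
        _ ≤ 1 / 4 := by norm_num
    calc (2 : ℝ) ^ nn * (1 / 2 : ℝ) ^ H ≤ (2 : ℝ) ^ nn * (1 / 2 : ℝ) ^ (8 * nn) :=
          mul_le_mul_of_nonneg_left h1 (by positivity)
      _ ≤ 1 / 4 := h2
  -- assemble
  have hCnM : (nn.choose M : ℝ) ≤ (2 : ℝ) ^ nn := by exact_mod_cast choose_le_two_pow' nn M
  have hT2 := term2_bound (K := K) (H := H) (N := N) (B := B) (by omega) hH hH8
  have hmain : (nn.choose M : ℝ) *
      (((N + H * Q - Cm : ℕ) : ℝ) ^ K + (K.choose H : ℝ) * ((B : ℝ) ^ H * (N : ℝ) ^ (K - H)))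
      < (N : ℝ) ^ K := by
    have hNK : (0 : ℝ) < (N : ℝ) ^ K := by positivity
    have hCn0 : (0 : ℝ) ≤ (nn.choose M : ℝ) := Nat.cast_nonneg _
    calc (nn.choose M : ℝ) *
        (((N + H * Q - Cm : ℕ) : ℝ) ^ K + (K.choose H : ℝ) * ((B : ℝ) ^ H * (N : ℝ) ^ (K - H)))
        ≤ (2 : ℝ) ^ nn *
          ((N : ℝ) ^ K * Real.exp (-(((2 * nn + 1 : ℕ) : ℝ))) + (N : ℝ) ^ K * (1 / 2) ^ H) := by
          apply mul_le_mul hCnM _ _ (by positivity)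
          · exact add_le_add hterm1 hT2
          · positivity
      _ = (N : ℝ) ^ K * ((2 : ℝ) ^ nn * Real.exp (-(((2 * nn + 1 : ℕ) : ℝ)))
            + (2 : ℝ) ^ nn * (1 / 2) ^ H) := by ring
      _ ≤ (N : ℝ) ^ K * (1 / 2 + 1 / 4) := by
          apply mul_le_mul_of_nonneg_left (add_le_add hscal1 hscal2) (le_of_lt hNK)
      _ < (N : ℝ) ^ K := by nlinarith
  exact_mod_cast hmain

end PartE


section PartF

open Real

lemma choose_lower_bound {M k : ℕ} (h2k : 2 * k ≤ M) :
    ((M : ℝ) / 2) ^ k ≤ (k.factorial : ℝ) * (M.choose k : ℝ) := by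
  have h1 : ((M + 1 - k : ℕ) : ℝ) ^ k ≤ (M.descFactorial k : ℝ) := by
    exact_mod_cast Nat.pow_sub_le_descFactorial M k
  have h2 : (M.descFactorial k : ℝ) = (k.factorial : ℝ) * (M.choose k : ℝ) := by
    exact_mod_cast congrArg (Nat.cast (R := ℝ)) (Nat.descFactorial_eq_factorial_mul_choose M k)
  have h3 : (M : ℝ) / 2 ≤ ((M + 1 - k : ℕ) : ℝ) := by
    rw [Nat.cast_sub (by omega)]
    push_cast
    have : 2 * (k : ℝ) ≤ (M : ℝ) := by exact_mod_cast h2k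
    linarith
  calc ((M : ℝ) / 2) ^ k ≤ ((M + 1 - k : ℕ) : ℝ) ^ k :=
        pow_le_pow_left₀ (by positivity) h3 k
    _ ≤ (M.descFactorial k : ℝ) := h1
    _ = (k.factorial : ℝ) * (M.choose k : ℝ) := h2

/-- The key quantity. -/
noncomputable def xval (n r s : ℕ) : ℝ :=
  (2 : ℝ) ^ 20 * (r : ℝ) ^ 4 * (n : ℝ) ^ (2 * ((r : ℝ) - s) / r)

lemma machine_result (n r s : ℕ) (hs1 : 1 ≤ s) (hsr : s < r) (hrn : r ≤ n)
    (hMn : ⌈xval n r s⌉₊ ≤ n) :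
    ∃ E : Finset (Finset (Fin n)), IsDesign n r s E ∧ indepNum n E ≤ ⌈xval n r s⌉₊ - 1 := by
  classical
  set M := ⌈xval n r s⌉₊ with hM
  set t := r - s with ht
  have hn1 : 1 ≤ n := le_trans (by omega) hrn
  have hr2 : 2 ≤ r := by omega
  have ht1 : 1 ≤ t := by omega
  have hnR1 : (1 : ℝ) ≤ (n : ℝ) := by exact_mod_cast hn1
  have hrR0 : (0 : ℝ) < (r : ℝ) := by
    have : 0 < r := by omega
    exact_mod_cast this
  have hsRr : (s : ℝ) ≤ (r : ℝ) := by exact_mod_cast hsr.le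
  set eR : ℝ := 2 * ((r : ℝ) - s) / r with heR
  have hexp0 : (0 : ℝ) ≤ eR := by
    apply div_nonneg _ (le_of_lt hrR0)
    linarith
  have hne1 : (1 : ℝ) ≤ (n : ℝ) ^ eR := by
    rw [show (1 : ℝ) = (n : ℝ) ^ (0 : ℝ) by rw [Real.rpow_zero]]
    exact Real.rpow_le_rpow_of_exponent_le hnR1 hexp0
  have hxM : xval n r s ≤ (M : ℝ) := Nat.le_ceil _
  have hxval : xval n r s = (2 : ℝ) ^ 20 * (r : ℝ) ^ 4 * (n : ℝ) ^ eR := rfl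
  have hrR2 : (2 : ℝ) ≤ (r : ℝ) := by exact_mod_cast hr2
  have hr_r4 : (r : ℝ) ≤ (r : ℝ) ^ 4 := by
    calc (r : ℝ) = (r : ℝ) ^ 1 := (pow_one _).symm
      _ ≤ (r : ℝ) ^ 4 := pow_le_pow_right₀ (by linarith) (by omega)
  have hr4 : (2 : ℝ) ≤ (2 : ℝ) ^ 20 * (r : ℝ) ^ 4 := by nlinarith [hr_r4, hrR2]
  have hMx : (2 : ℝ) ^ 20 * (r : ℝ) ^ 4 * (n : ℝ) ^ eR ≤ (M : ℝ) := by
    rw [← hxval]; exact hxM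
  have hM2r : 2 * r ≤ M := by
    have h1 : 2 * (r : ℝ) ≤ (M : ℝ) := by
      calc 2 * (r : ℝ) ≤ (2 : ℝ) ^ 20 * (r : ℝ) ^ 4 := by nlinarith [hr_r4, hrR2]
        _ = (2 : ℝ) ^ 20 * (r : ℝ) ^ 4 * 1 := by ring
        _ ≤ (2 : ℝ) ^ 20 * (r : ℝ) ^ 4 * (n : ℝ) ^ eR := by
            apply mul_le_mul_of_nonneg_left hne1 (by positivity)
        _ ≤ (M : ℝ) := hMx
    exact_mod_cast h1
  have hMr : r ≤ M := by omega
  have hsM : s ≤ M := by omega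
  -- r < 2 s
  have hrs2 : r < 2 * s := by
    by_contra hcon
    push_neg at hcon
    have he1 : (1 : ℝ) ≤ eR := by
      rw [heR, le_div_iff₀ hrR0]
      have h2s : 2 * (s : ℝ) ≤ (r : ℝ) := by exact_mod_cast hcon
      linarith
    have hnen : (n : ℝ) ≤ (n : ℝ) ^ eR := by
      calc (n : ℝ) = (n : ℝ) ^ (1 : ℝ) := (Real.rpow_one _).symm
        _ ≤ (n : ℝ) ^ eR := Real.rpow_le_rpow_of_exponent_le hnR1 he1
    have hlt : (n : ℝ) < (M : ℝ) := by
      calc (n : ℝ) < 2 * (n : ℝ) := by linarith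
        _ ≤ (2 : ℝ) ^ 20 * (r : ℝ) ^ 4 * (n : ℝ) := by nlinarith [hr4, hnR1]
        _ ≤ (2 : ℝ) ^ 20 * (r : ℝ) ^ 4 * (n : ℝ) ^ eR := by
            apply mul_le_mul_of_nonneg_left hnen (by positivity)
        _ ≤ (M : ℝ) := hMx
    have : n < M := by exact_mod_cast hlt
    omega
  have h2sr1 : r + 1 ≤ 2 * s := by omega
  -- abbreviations
  set N := n.choose r with hN
  set Cm := M.choose r with hCm
  set Qq := r.choose s * (M - s).choose (r - s) with hQq
  set Bb := M.choose s * (n - s).choose (r - s) with hBb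
  set K := (4 * n + 3) * N / Cm + 1 with hK
  set H := 8 * (K * Bb / N) + 8 * n + 8 with hH
  have hN1 : 1 ≤ N := Nat.choose_pos hrn
  have hCm1 : 1 ≤ Cm := Nat.choose_pos hMr
  have hCmN : Cm ≤ N := Nat.choose_le_choose r hMn
  -- rpow/pow conversions
  have hpow2t : ((n : ℝ) ^ eR) ^ (r : ℕ) = (n : ℝ) ^ (2 * t : ℕ) := by
    rw [← Real.rpow_natCast ((n : ℝ) ^ eR) r, ← Real.rpow_mul (by positivity)]
    rw [show eR * (r : ℕ) = ((2 * t : ℕ) : ℝ) by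
      rw [heR]
      push_cast [Nat.cast_sub hsr.le]
      field_simp
      rw [ht, Nat.cast_sub hsr.le]]
    rw [Real.rpow_natCast]
  -- MASTER A
  have masterA : 256 * (4 * n + 3) * (r.choose s * r.choose s) * ((n - s).choose (r - s)) ≤ Cm := by
    have hcore : (256 * (4 * n + 3) * (r.choose s * r.choose s) * ((n - s).choose (r - s)) : ℝ)
        * (r.factorial : ℝ) ≤ ((M : ℝ) / 2) ^ r := by
      have hL1 : ((4 * n + 3 : ℕ) : ℝ) ≤ 7 * (n : ℝ) := by
        push_cast
        have : (1 : ℝ) ≤ (n : ℝ) := hnR1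
        linarith
      have hL2 : ((r.choose s * r.choose s : ℕ) : ℝ) ≤ (4 : ℝ) ^ r := by
        have h1 : (r.choose s : ℝ) ≤ (2 : ℝ) ^ r := by
          exact_mod_cast choose_le_two_pow' r s
        have h0 : (0 : ℝ) ≤ (r.choose s : ℝ) := Nat.cast_nonneg _
        push_cast
        calc (r.choose s : ℝ) * (r.choose s : ℝ) ≤ (2 : ℝ) ^ r * (2 : ℝ) ^ r := by
              apply mul_le_mul h1 h1 h0 (by positivity)
          _ = (4 : ℝ) ^ r := by rw [← mul_pow]; norm_num
      have hL3 : (((n - s).choose (r - s) : ℕ) : ℝ) ≤ (n : ℝ) ^ (t : ℕ) := by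
        calc (((n - s).choose (r - s) : ℕ) : ℝ) ≤ ((n - s : ℕ) : ℝ) ^ (r - s : ℕ) := by
              exact_mod_cast Nat.choose_le_pow (n - s) (r - s)
          _ ≤ (n : ℝ) ^ (t : ℕ) := by
              rw [← ht]
              apply pow_le_pow_left₀ (Nat.cast_nonneg _)
              exact_mod_cast Nat.sub_le n s
      have hfacR : (r.factorial : ℝ) ≤ (r : ℝ) ^ r := by
        exact_mod_cast Nat.factorial_le_pow r
      have hMhalf : (2 : ℝ) ^ 19 * (r : ℝ) ^ 4 * (n : ℝ) ^ eR ≤ (M : ℝ) / 2 := by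
        rw [le_div_iff₀ (by norm_num)]
        calc (2 : ℝ) ^ 19 * (r : ℝ) ^ 4 * (n : ℝ) ^ eR * 2
            = (2 : ℝ) ^ 20 * (r : ℝ) ^ 4 * (n : ℝ) ^ eR := by ring
          _ ≤ (M : ℝ) := hMx
      have hMpow : ((2 : ℝ) ^ 19 * (r : ℝ) ^ 4 * (n : ℝ) ^ eR) ^ (r : ℕ) ≤ ((M : ℝ) / 2) ^ r :=
        pow_le_pow_left₀ (by positivity) hMhalf r
      have hexpand : ((2 : ℝ) ^ 19 * (r : ℝ) ^ 4 * (n : ℝ) ^ eR) ^ (r : ℕ)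
          = (2 : ℝ) ^ (19 * r) * (r : ℝ) ^ (4 * r) * (n : ℝ) ^ (2 * t : ℕ) := by
        rw [mul_pow, mul_pow, hpow2t, ← pow_mul, ← pow_mul]
      have hnpow : (n : ℝ) ^ (t + 1 : ℕ) ≤ (n : ℝ) ^ (2 * t : ℕ) := by
        apply pow_le_pow_right₀ hnR1
        omega
      have hconst : 256 * 7 * (4 : ℝ) ^ r * (r : ℝ) ^ r ≤ (2 : ℝ) ^ (19 * r) * (r : ℝ) ^ (4 * r) := by
        have hc1 : (4 : ℝ) ^ r * (2:ℝ)^17 ≤ (2 : ℝ) ^ (19 * r) := by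
          calc (4 : ℝ) ^ r * (2:ℝ)^17 = (2 : ℝ) ^ (2 * r) * (2:ℝ)^17 := by
                rw [pow_mul]; norm_num
            _ = (2 : ℝ) ^ (2 * r + 17) := by rw [pow_add]
            _ ≤ (2 : ℝ) ^ (19 * r) := by
                apply pow_le_pow_right₀ (by norm_num)
                omega
        have hc2 : (r : ℝ) ^ r ≤ (r : ℝ) ^ (4 * r) := by
          apply pow_le_pow_right₀ (by exact_mod_cast (by omega : 1 ≤ r))
          omega
        have h0 : (0:ℝ) ≤ (4:ℝ)^r := by positivity
        have h0' : (0:ℝ) ≤ (r:ℝ)^r := by positivity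
        calc 256 * 7 * (4 : ℝ) ^ r * (r : ℝ) ^ r ≤ (2:ℝ)^17 * (4 : ℝ) ^ r * (r : ℝ) ^ r := by
              nlinarith
          _ ≤ (2 : ℝ) ^ (19 * r) * (r : ℝ) ^ r := by
              apply mul_le_mul_of_nonneg_right _ h0'
              calc (2:ℝ)^17 * (4 : ℝ) ^ r = (4 : ℝ) ^ r * (2:ℝ)^17 := by ring
                _ ≤ (2 : ℝ) ^ (19 * r) := hc1
          _ ≤ (2 : ℝ) ^ (19 * r) * (r : ℝ) ^ (4 * r) := by
              apply mul_le_mul_of_nonneg_left hc2 (by positivity)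
      calc (256 * (4 * n + 3) * (r.choose s * r.choose s) * ((n - s).choose (r - s)) : ℝ)
            * (r.factorial : ℝ)
          = 256 * ((4 * n + 3 : ℕ) : ℝ) * ((r.choose s * r.choose s : ℕ) : ℝ)
            * (((n - s).choose (r - s) : ℕ) : ℝ) * (r.factorial : ℝ) := by push_cast; ring
        _ ≤ 256 * (7 * (n:ℝ)) * ((4:ℝ)^r) * ((n:ℝ)^(t:ℕ)) * ((r:ℝ)^r) := by
            gcongr
        _ = (256 * (7 * (n:ℝ)) * ((4:ℝ)^r) * ((n:ℝ)^(t:ℕ))) * ((r:ℝ)^r) := by ring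
        _ = (256 * 7 * (4:ℝ)^r * (r:ℝ)^r) * ((n:ℝ) * (n:ℝ)^(t:ℕ)) := by ring
        _ = (256 * 7 * (4:ℝ)^r * (r:ℝ)^r) * ((n:ℝ)^(t+1:ℕ)) := by
            rw [pow_succ]
            ring
        _ ≤ ((2 : ℝ) ^ (19 * r) * (r : ℝ) ^ (4 * r)) * ((n : ℝ) ^ (2 * t : ℕ)) := by
            apply mul_le_mul hconst hnpow (by positivity) (by positivity)
        _ = ((2 : ℝ) ^ 19 * (r : ℝ) ^ 4 * (n : ℝ) ^ eR) ^ (r : ℕ) := hexpand.symm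
        _ ≤ ((M : ℝ) / 2) ^ r := hMpow
    -- conclude in ℕ
    have hfacpos : (0 : ℝ) < (r.factorial : ℝ) := by exact_mod_cast r.factorial_pos
    have hfin : (256 * (4 * n + 3) * (r.choose s * r.choose s) * ((n - s).choose (r - s)) : ℝ)
        ≤ (Cm : ℝ) := by
      have h1 := choose_lower_bound (M := M) (k := r) hM2r
      have h2 : (256 * (4 * n + 3) * (r.choose s * r.choose s) * ((n - s).choose (r - s)) : ℝ)
          * (r.factorial : ℝ) ≤ (r.factorial : ℝ) * (Cm : ℝ) := le_trans hcore h1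
      calc (256 * (4 * n + 3) * (r.choose s * r.choose s) * ((n - s).choose (r - s)) : ℝ)
          = (256 * (4 * n + 3) * (r.choose s * r.choose s) * ((n - s).choose (r - s)) : ℝ)
            * (r.factorial : ℝ) / (r.factorial : ℝ) := by field_simp
        _ ≤ (r.factorial : ℝ) * (Cm : ℝ) / (r.factorial : ℝ) := by
            apply div_le_div_of_nonneg_right h2 hfacpos.le
        _ = (Cm : ℝ) := by field_simp
    exact_mod_cast hfin
  -- MASTER B
  have masterB : 1024 * n * (r.choose s * r.choose s) ≤ M.choose s := by
    have h2s : 2 * s ≤ M := by omega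
    have hcore : (1024 * n * (r.choose s * r.choose s) : ℝ) * ((r:ℝ) ^ s) ≤ ((M : ℝ) / 2) ^ s := by
      have hL2 : ((r.choose s * r.choose s : ℕ) : ℝ) ≤ (4 : ℝ) ^ r := by
        have h1 : (r.choose s : ℝ) ≤ (2 : ℝ) ^ r := by
          exact_mod_cast choose_le_two_pow' r s
        have h0 : (0 : ℝ) ≤ (r.choose s : ℝ) := Nat.cast_nonneg _
        push_cast
        calc (r.choose s : ℝ) * (r.choose s : ℝ) ≤ (2 : ℝ) ^ r * (2 : ℝ) ^ r := by
              apply mul_le_mul h1 h1 h0 (by positivity)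
          _ = (4 : ℝ) ^ r := by rw [← mul_pow]; norm_num
      have hMhalf : (2 : ℝ) ^ 19 * (r : ℝ) ^ 4 * (n : ℝ) ^ eR ≤ (M : ℝ) / 2 := by
        rw [le_div_iff₀ (by norm_num)]
        calc (2 : ℝ) ^ 19 * (r : ℝ) ^ 4 * (n : ℝ) ^ eR * 2
            = (2 : ℝ) ^ 20 * (r : ℝ) ^ 4 * (n : ℝ) ^ eR := by ring
          _ ≤ (M : ℝ) := hMx
      have hMpow : ((2 : ℝ) ^ 19 * (r : ℝ) ^ 4 * (n : ℝ) ^ eR) ^ (s : ℕ) ≤ ((M : ℝ) / 2) ^ s :=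
        pow_le_pow_left₀ (by positivity) hMhalf s
      have hpowes : ((n : ℝ) ^ eR) ^ (s : ℕ) = (n : ℝ) ^ (eR * s) := by
        rw [← Real.rpow_natCast ((n : ℝ) ^ eR) s, ← Real.rpow_mul (by positivity)]
      have hes1 : (1 : ℝ) ≤ eR * s := by
        rw [heR]
        rw [div_mul_eq_mul_div, le_div_iff₀ hrR0]
        have htR : (1 : ℝ) ≤ (r : ℝ) - s := by
          have : s + 1 ≤ r := hsr
          have : ((s + 1 : ℕ) : ℝ) ≤ (r : ℝ) := by exact_mod_cast this
          push_cast at this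
          linarith
        have hsR1 : (1 : ℝ) ≤ (s : ℝ) := by exact_mod_cast hs1
        have h2s' : (r : ℝ) + 1 ≤ 2 * s := by exact_mod_cast h2sr1
        nlinarith
      have hnes : (n : ℝ) ≤ ((n : ℝ) ^ eR) ^ (s : ℕ) := by
        rw [hpowes]
        calc (n : ℝ) = (n : ℝ) ^ (1 : ℝ) := (Real.rpow_one _).symm
          _ ≤ (n : ℝ) ^ (eR * s) := Real.rpow_le_rpow_of_exponent_le hnR1 hes1
      have hconst : 1024 * (4 : ℝ) ^ r * (r : ℝ) ^ s ≤ (2 : ℝ) ^ (19 * s) * (r : ℝ) ^ (4 * s) := by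
        have hc1 : 1024 * (4 : ℝ) ^ r ≤ (2 : ℝ) ^ (19 * s) := by
          calc 1024 * (4 : ℝ) ^ r = (2 : ℝ) ^ (2 * r + 10) := by
                rw [pow_add, pow_mul]; norm_num; ring
            _ ≤ (2 : ℝ) ^ (19 * s) := by
                apply pow_le_pow_right₀ (by norm_num)
                omega
        have hc2 : (r : ℝ) ^ s ≤ (r : ℝ) ^ (4 * s) := by
          apply pow_le_pow_right₀ (by exact_mod_cast (by omega : 1 ≤ r))
          omega
        calc 1024 * (4 : ℝ) ^ r * (r : ℝ) ^ s ≤ (2 : ℝ) ^ (19 * s) * (r : ℝ) ^ s := by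
              apply mul_le_mul_of_nonneg_right hc1 (by positivity)
          _ ≤ (2 : ℝ) ^ (19 * s) * (r : ℝ) ^ (4 * s) := by
              apply mul_le_mul_of_nonneg_left hc2 (by positivity)
      have hexpand : ((2 : ℝ) ^ 19 * (r : ℝ) ^ 4 * (n : ℝ) ^ eR) ^ (s : ℕ)
          = (2 : ℝ) ^ (19 * s) * (r : ℝ) ^ (4 * s) * ((n : ℝ) ^ eR) ^ (s : ℕ) := by
        rw [mul_pow, mul_pow, ← pow_mul, ← pow_mul]
      calc (1024 * n * (r.choose s * r.choose s) : ℝ) * ((r:ℝ) ^ s)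
          = 1024 * (n : ℝ) * ((r.choose s * r.choose s : ℕ) : ℝ) * ((r:ℝ) ^ s) := by
            push_cast; ring
        _ ≤ 1024 * (n : ℝ) * (4 : ℝ) ^ r * (r : ℝ) ^ s := by
            gcongr
        _ = (1024 * (4 : ℝ) ^ r * (r : ℝ) ^ s) * (n : ℝ) := by ring
        _ ≤ ((2 : ℝ) ^ (19 * s) * (r : ℝ) ^ (4 * s)) * ((n : ℝ) ^ eR) ^ (s : ℕ) := by
            apply mul_le_mul hconst hnes (by positivity) (by positivity)
        _ = ((2 : ℝ) ^ 19 * (r : ℝ) ^ 4 * (n : ℝ) ^ eR) ^ (s : ℕ) := hexpand.symm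
        _ ≤ ((M : ℝ) / 2) ^ s := hMpow
    have hfacR : (s.factorial : ℝ) ≤ (r : ℝ) ^ s := by
      calc (s.factorial : ℝ) ≤ ((s : ℝ)) ^ s := by exact_mod_cast Nat.factorial_le_pow s
        _ ≤ (r : ℝ) ^ s := by
            apply pow_le_pow_left₀ (Nat.cast_nonneg _) hsRr
    have hfin : (1024 * n * (r.choose s * r.choose s) : ℝ) ≤ (M.choose s : ℝ) := by
      have h1 := choose_lower_bound (M := M) (k := s) h2s
      have hLpos : (0 : ℝ) ≤ (1024 * n * (r.choose s * r.choose s) : ℝ) := by positivity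
      have h2 : (1024 * n * (r.choose s * r.choose s) : ℝ) * (s.factorial : ℝ)
          ≤ (s.factorial : ℝ) * (M.choose s : ℝ) := by
        calc (1024 * n * (r.choose s * r.choose s) : ℝ) * (s.factorial : ℝ)
            ≤ (1024 * n * (r.choose s * r.choose s) : ℝ) * ((r : ℝ) ^ s) := by
              apply mul_le_mul_of_nonneg_left hfacR hLpos
          _ ≤ ((M : ℝ) / 2) ^ s := hcore
          _ ≤ (s.factorial : ℝ) * (M.choose s : ℝ) := h1
      have hfacpos : (0 : ℝ) < (s.factorial : ℝ) := by exact_mod_cast s.factorial_pos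
      calc (1024 * n * (r.choose s * r.choose s) : ℝ)
          = (1024 * n * (r.choose s * r.choose s) : ℝ) * (s.factorial : ℝ) / (s.factorial : ℝ) := by
            field_simp
        _ ≤ (s.factorial : ℝ) * (M.choose s : ℝ) / (s.factorial : ℝ) := by
            apply div_le_div_of_nonneg_right h2 hfacpos.le
        _ = (M.choose s : ℝ) := by field_simp
    exact_mod_cast hfin
  -- covering inequality for K
  have hcov : (4 * n + 3) * N ≤ K * Cm := by
    calc (4 * n + 3) * N
        = Cm * ((4 * n + 3) * N / Cm) + (4 * n + 3) * N % Cm := (Nat.div_add_mod _ _).symm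
      _ ≤ Cm * ((4 * n + 3) * N / Cm) + Cm :=
          Nat.add_le_add_left (Nat.mod_lt _ (by omega)).le _
      _ = ((4 * n + 3) * N / Cm + 1) * Cm := by ring
      _ = K * Cm := by rw [hK]
  have hH8 : 8 * (K * Bb) ≤ H * N := by
    calc 8 * (K * Bb)
        = 8 * (N * (K * Bb / N) + K * Bb % N) := by rw [Nat.div_add_mod]
      _ ≤ 8 * (N * (K * Bb / N) + N) :=
          Nat.mul_le_mul_left _ (Nat.add_le_add_left (Nat.mod_lt _ (by omega)).le _)
      _ = (8 * (K * Bb / N) + 8) * N := by ring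
      _ ≤ H * N := Nat.mul_le_mul_right _ (by rw [hH]; omega)
  have hH4n : 8 * n ≤ H := by rw [hH]; omega
  -- the choose identity
  have hrCs1 : 1 ≤ r.choose s := Nat.choose_pos hsr.le
  have hidM : Cm * r.choose s = M.choose s * (M - s).choose (r - s) :=
    Nat.choose_mul hsr.le
  set W := r.choose s * r.choose s * ((n - s).choose (r - s)) with hW
  have hQB : (Bb : ℝ) * (Qq : ℝ) = (Cm : ℝ) * (W : ℝ) := by
    have hnat : Bb * Qq = Cm * W := by
      rw [hBb, hQq, hW]
      calc M.choose s * (n - s).choose (r - s) * (r.choose s * (M - s).choose (r - s))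
          = (M.choose s * (M - s).choose (r - s)) * (r.choose s * (n - s).choose (r - s)) := by
            ring
        _ = (Cm * r.choose s) * (r.choose s * (n - s).choose (r - s)) := by rw [hidM]
        _ = Cm * (r.choose s * r.choose s * ((n - s).choose (r - s))) := by ring
    exact_mod_cast congrArg (Nat.cast (R := ℝ)) hnat
  have masterA' : 256 * (4 * n + 3) * W ≤ Cm := by
    rw [hW, ← mul_assoc]
    exact masterA
  have hterm3 : 8 * ((8 * n + 8) * Qq) ≤ Cm := by
    apply Nat.le_of_mul_le_mul_right _ (show 0 < r.choose s by omega)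
    calc 8 * ((8 * n + 8) * Qq) * r.choose s
        = (8 * (8 * n + 8) * (r.choose s * r.choose s)) * ((M - s).choose (r - s)) := by
          rw [hQq]; ring
      _ ≤ M.choose s * ((M - s).choose (r - s)) := by
          apply Nat.mul_le_mul_right
          calc 8 * (8 * n + 8) * (r.choose s * r.choose s)
              = (64 * n + 64) * (r.choose s * r.choose s) := by ring
            _ ≤ 1024 * n * (r.choose s * r.choose s) := by
                apply Nat.mul_le_mul_right
                omega
            _ ≤ M.choose s := masterB
      _ = Cm * r.choose s := hidM.symm
  -- real bounds for K and H
  have hCmR0 : (0 : ℝ) < (Cm : ℝ) := by exact_mod_cast hCm1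
  have hNR0 : (0 : ℝ) < (N : ℝ) := by exact_mod_cast hN1
  have hQq0 : (0 : ℝ) ≤ (Qq : ℝ) := Nat.cast_nonneg _
  have hBb0 : (0 : ℝ) ≤ (Bb : ℝ) := Nat.cast_nonneg _
  have hWR : (0 : ℝ) ≤ (W : ℝ) := Nat.cast_nonneg _
  have hKR : (K : ℝ) ≤ (4 * (n : ℝ) + 3) * (N : ℝ) / (Cm : ℝ) + 1 := by
    have hdiv := Nat.cast_div_le (α := ℝ) (m := (4 * n + 3) * N) (n := Cm)
    rw [hK]
    push_cast
    push_cast at hdiv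
    linarith
  have hHR : (H : ℝ) ≤ 8 * ((K : ℝ) * (Bb : ℝ) / (N : ℝ)) + 8 * (n : ℝ) + 8 := by
    have hdiv := Nat.cast_div_le (α := ℝ) (m := K * Bb) (n := N)
    rw [hH]
    push_cast
    push_cast at hdiv
    linarith
  have hHQ : 2 * (H * Qq) ≤ Cm := by
    have hmA : 256 * (4 * (n : ℝ) + 3) * (W : ℝ) ≤ (Cm : ℝ) := by
      have := masterA'
      exact_mod_cast this
    have ht3R : 8 * ((8 * (n : ℝ) + 8) * (Qq : ℝ)) ≤ (Cm : ℝ) := by exact_mod_cast hterm3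
    have hCmNR : (Cm : ℝ) ≤ (N : ℝ) := by exact_mod_cast hCmN
    have hn3 : (0 : ℝ) ≤ 4 * (n : ℝ) + 3 := by positivity
    -- bound (K*Bb)/N
    have h2 : (K : ℝ) * (Bb : ℝ) / (N : ℝ)
        ≤ (4 * (n : ℝ) + 3) * (Bb : ℝ) / (Cm : ℝ) + (Bb : ℝ) / (N : ℝ) := by
      have hKB : (K : ℝ) * (Bb : ℝ)
          ≤ ((4 * (n : ℝ) + 3) * (N : ℝ) / (Cm : ℝ) + 1) * (Bb : ℝ) :=
        mul_le_mul_of_nonneg_right hKR hBb0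
      calc (K : ℝ) * (Bb : ℝ) / (N : ℝ)
          ≤ ((4 * (n : ℝ) + 3) * (N : ℝ) / (Cm : ℝ) + 1) * (Bb : ℝ) / (N : ℝ) :=
            div_le_div_of_nonneg_right hKB hNR0.le
        _ = (4 * (n : ℝ) + 3) * (Bb : ℝ) / (Cm : ℝ) + (Bb : ℝ) / (N : ℝ) := by
            field_simp
    -- three terms
    have hterm1R : 8 * ((4 * (n : ℝ) + 3) * (Bb : ℝ) / (Cm : ℝ)) * (Qq : ℝ) ≤ (Cm : ℝ) / 32 := by
      have : 8 * ((4 * (n : ℝ) + 3) * (Bb : ℝ) / (Cm : ℝ)) * (Qq : ℝ)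
          = 8 * (4 * (n : ℝ) + 3) * ((Bb : ℝ) * (Qq : ℝ)) / (Cm : ℝ) := by ring
      rw [this, hQB]
      have : 8 * (4 * (n : ℝ) + 3) * ((Cm : ℝ) * (W : ℝ)) / (Cm : ℝ)
          = 8 * (4 * (n : ℝ) + 3) * (W : ℝ) := by
        field_simp
      rw [this]
      linarith
    have hterm2R : 8 * ((Bb : ℝ) / (N : ℝ)) * (Qq : ℝ) ≤ (Cm : ℝ) / 32 := by
      have he : 8 * ((Bb : ℝ) / (N : ℝ)) * (Qq : ℝ) = 8 * ((Cm : ℝ) * (W : ℝ)) / (N : ℝ) := by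
        rw [← hQB]; ring
      rw [he]
      have h8W : 8 * ((Cm : ℝ) * (W : ℝ)) / (N : ℝ) ≤ 8 * (W : ℝ) := by
        rw [div_le_iff₀ hNR0]
        nlinarith
      have h256 : 256 * (W : ℝ) ≤ (Cm : ℝ) := by nlinarith
      linarith
    have hterm3R : (8 * (n : ℝ) + 8) * (Qq : ℝ) ≤ (Cm : ℝ) / 8 := by linarith
    have hHQR : (H : ℝ) * (Qq : ℝ) ≤ (Cm : ℝ) / 32 + (Cm : ℝ) / 32 + (Cm : ℝ) / 8 := by
      have h1 : (H : ℝ) * (Qq : ℝ)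
          ≤ (8 * ((K : ℝ) * (Bb : ℝ) / (N : ℝ)) + 8 * (n : ℝ) + 8) * (Qq : ℝ) :=
        mul_le_mul_of_nonneg_right hHR hQq0
      have h2Q := mul_le_mul_of_nonneg_right h2 hQq0
      have e1 : (8 * ((K : ℝ) * (Bb : ℝ) / (N : ℝ)) + 8 * (n : ℝ) + 8) * (Qq : ℝ)
          = 8 * (((K : ℝ) * (Bb : ℝ) / (N : ℝ)) * (Qq : ℝ)) + (8 * (n : ℝ) + 8) * (Qq : ℝ) := by
        ring
      have e2 : ((4 * (n : ℝ) + 3) * (Bb : ℝ) / (Cm : ℝ) + (Bb : ℝ) / (N : ℝ)) * (Qq : ℝ)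
          = (4 * (n : ℝ) + 3) * (Bb : ℝ) / (Cm : ℝ) * (Qq : ℝ)
            + (Bb : ℝ) / (N : ℝ) * (Qq : ℝ) := by ring
      have e3 : 8 * ((4 * (n : ℝ) + 3) * (Bb : ℝ) / (Cm : ℝ) * (Qq : ℝ))
          = 8 * ((4 * (n : ℝ) + 3) * (Bb : ℝ) / (Cm : ℝ)) * (Qq : ℝ) := by ring
      have e4 : 8 * ((Bb : ℝ) / (N : ℝ) * (Qq : ℝ)) = 8 * ((Bb : ℝ) / (N : ℝ)) * (Qq : ℝ) := by
        ring
      linarith [h1, h2Q, hterm1R, hterm2R, hterm3R, e1, e2, e3, e4]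
    have : 2 * ((H : ℝ) * (Qq : ℝ)) ≤ (Cm : ℝ) := by linarith
    exact_mod_cast this
  -- apply the probabilistic machine
  have hnum := numeric_main (N := N) (Cm := Cm) (Q := Qq) (B := Bb) (K := K) (H := H)
      (M := M) (nn := n) hN1 hn1 hCmN hcov hHQ hH8 hH4n
  obtain ⟨ω, hω⟩ := exists_good (n := n) (r := r) s M H K (by
    rw [hN, hCm, hQq, hBb] at hnum
    exact hnum)
  refine ⟨EDes s ω, isDesign_EDes s ω, ?_⟩
  apply indepNum_le_of _ (empty_not_mem_EDes s ω (by omega))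
  intro S hind
  exact indep_card_le_of_cover (EDes_covers s M ω hω) S hind

end PartF



section Final

lemma complete_case (n r : ℕ) (hr1 : 1 ≤ r) (hrn : r ≤ n) :
    ∃ E : Finset (Finset (Fin n)), IsDesign n r r E ∧ indepNum n E ≤ r - 1 := by
  classical
  refine ⟨Finset.powersetCard r (univ : Finset (Fin n)), ⟨?_, ?_⟩, ?_⟩
  · intro e he
    exact (Finset.mem_powersetCard.1 he).2
  · intro e₁ he₁ e₂ he₂ hne
    have h1 := (Finset.mem_powersetCard.1 he₁).2
    have h2 := (Finset.mem_powersetCard.1 he₂).2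
    by_contra hcon
    push_neg at hcon
    have ha : e₁ ∩ e₂ = e₁ :=
      Finset.eq_of_subset_of_card_le Finset.inter_subset_left (by omega)
    have hb : e₁ ∩ e₂ = e₂ :=
      Finset.eq_of_subset_of_card_le Finset.inter_subset_right (by omega)
    exact hne (ha ▸ hb)
  · apply indepNum_le_of
    · intro h
      have := (Finset.mem_powersetCard.1 h).2
      rw [Finset.card_empty] at this
      omega
    · intro S hind
      by_contra hcon
      push_neg at hcon
      obtain ⟨S', hsub, hcard⟩ := Finset.exists_subset_card_eq (show r ≤ S.card by omega)
      exact hind S' (Finset.mem_powersetCard.2 ⟨Finset.subset_univ _, hcard⟩) hsub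

lemma indepNum_empty_le (n : ℕ) : indepNum n (∅ : Finset (Finset (Fin n))) ≤ n := by
  apply indepNum_le_of _ (by simp)
  intro S _
  calc S.card ≤ (univ : Finset (Fin n)).card := Finset.card_le_univ S
    _ = n := by rw [Finset.card_univ, Fintype.card_fin]

theorem explicit_designs_even' :
    ∃ C : ℝ, 1 ≤ C ∧
      ∀ n r s : ℕ, 1 ≤ s → s ≤ r → r ≤ n → Even r →
        ∃ E : Finset (Finset (Fin n)), IsDesign n r s E ∧
          (indepNum n E : ℝ) ≤ C * (r : ℝ) ^ 4 * (n : ℝ) ^ (2 * ((r : ℝ) - s) / r) := by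
  refine ⟨2 ^ 20, by norm_num, ?_⟩
  intro n r s hs1 hsr hrn _heven
  rcases eq_or_lt_of_le hsr with hEq | hlt
  · subst hEq
    obtain ⟨E, hdes, hind⟩ := complete_case n s (by omega) hrn
    refine ⟨E, hdes, ?_⟩
    have hsR1 : (1 : ℝ) ≤ (s : ℝ) := by exact_mod_cast hs1
    calc (indepNum n E : ℝ) ≤ ((s - 1 : ℕ) : ℝ) := by exact_mod_cast hind
      _ ≤ (s : ℝ) := by
          have : (s - 1 : ℕ) ≤ s := Nat.sub_le s 1
          exact_mod_cast this
      _ ≤ 2 ^ 20 * (s : ℝ) ^ 4 := by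
          have h4 : (s : ℝ) ≤ (s : ℝ) ^ 4 := by
            calc (s : ℝ) = (s : ℝ) ^ 1 := (pow_one _).symm
              _ ≤ (s : ℝ) ^ 4 := pow_le_pow_right₀ hsR1 (by omega)
          nlinarith [h4]
      _ = 2 ^ 20 * (s : ℝ) ^ 4 * (n : ℝ) ^ (2 * ((s : ℝ) - (s : ℝ)) / (s : ℝ)) := by
          rw [show 2 * ((s : ℝ) - (s : ℝ)) / (s : ℝ) = 0 by ring, Real.rpow_zero, mul_one]
  · by_cases hMn : ⌈xval n r s⌉₊ ≤ n
    · obtain ⟨E, hdes, hind⟩ := machine_result n r s hs1 hlt hrn hMn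
      refine ⟨E, hdes, ?_⟩
      have hn0 : (0 : ℝ) < (n : ℝ) := by
        have : 0 < n := by omega
        exact_mod_cast this
      have hx0 : 0 < xval n r s := by
        unfold xval
        have hr0 : (0 : ℝ) < (r : ℝ) := by
          have : 0 < r := by omega
          exact_mod_cast this
        have := Real.rpow_pos_of_pos hn0 (2 * ((r : ℝ) - s) / r)
        positivity
      have hM1 : 1 ≤ ⌈xval n r s⌉₊ := Nat.one_le_ceil_iff.2 hx0
      calc (indepNum n E : ℝ) ≤ ((⌈xval n r s⌉₊ - 1 : ℕ) : ℝ) := by exact_mod_cast hind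
        _ = (⌈xval n r s⌉₊ : ℝ) - 1 := by
            rw [Nat.cast_sub hM1]
            norm_num
        _ ≤ xval n r s := by
            have := Nat.ceil_lt_add_one (le_of_lt hx0)
            linarith
        _ = 2 ^ 20 * (r : ℝ) ^ 4 * (n : ℝ) ^ (2 * ((r : ℝ) - s) / r) := rfl
    · push_neg at hMn
      refine ⟨∅, ⟨by simp, by simp⟩, ?_⟩
      have hnx : (n : ℝ) < xval n r s := Nat.lt_ceil.1 hMn
      calc (indepNum n (∅ : Finset (Finset (Fin n))) : ℝ) ≤ (n : ℝ) := by
            exact_mod_cast indepNum_empty_le n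
        _ ≤ xval n r s := le_of_lt hnx
        _ = 2 ^ 20 * (r : ℝ) ^ 4 * (n : ℝ) ^ (2 * ((r : ℝ) - s) / r) := rfl

end Final


end DesignMachine


/-- There is a universal constant `C ≥ 1` such that for all positive
integers `n ≥ r ≥ s` with `r` even, there exists an `(n,r,s)`-design `G` with
independence number `α(G) ≤ C·r⁴·n^{2(r−s)/r}`. -/
theorem explicit_designs_even :
    ∃ C : ℝ, 1 ≤ C ∧
      ∀ n r s : ℕ, 1 ≤ s → s ≤ r → r ≤ n → Even r →
        ∃ E : Finset (Finset (Fin n)), IsDesign n r s E ∧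
          (indepNum n E : ℝ) ≤ C * (r : ℝ) ^ 4 * (n : ℝ) ^ (2 * ((r : ℝ) - s) / r) := by
  exact explicit_designs_even'
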